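/- Let W' be the infinite dihedral group generated by s_0 and t = s_1⋯s_{n-1}s_n s_{n-1}⋯s_1 inside the affine Weyl group of type Ã_n with its exotic realization over ℤ[q,q^{-1}]. Setting β = α_1 + ⋯ + α_n and β^∨ = α_1^∨ + ⋯ + α_n^∨, one has ⟨β^∨, α_0⟩·⟨α_0^∨, β⟩ = (q+q^{-1})², i.e., the Cartan matrix of the realization of W' given by {β, α_0} and {β^∨, α_0^∨} is the exotic affine Cartan matrix of sl_2 (with entries ⟨α_0^∨,β⟩ = ⟨β^∨,α_0⟩ = -(q+q^{-1})). -/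

import Mathlib

open LaurentPolynomial

/-- The exotic affine Cartan matrix `a_{ij} = ⟨α_i^∨, α_j⟩` of `sl_{n+1}` over
`ℤ[q,q⁻¹]` (`q = T 1`, `q⁻¹ = T (-1)`): diagonal `2`, `a_{i,i+1} = a_{i+1,i} = -1`
for `1 ≤ i ≤ n-1`, and affine entries `a_{0,1} = -q`, `a_{n,0} = -q`,
`a_{1,0} = -q⁻¹`, `a_{0,n} = -q⁻¹`, all other entries `0`. -/
noncomputable def exoticPairing (n : ℕ) (i j : Fin (n + 1)) : LaurentPolynomial ℤ :=
  if i = j then 2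
  else if (i.val = 0 ∧ j.val = 1) ∨ (i.val = n ∧ j.val = 0) then -T 1
  else if (i.val = 1 ∧ j.val = 0) ∨ (i.val = 0 ∧ j.val = n) then -T (-1)
  else if i.val + 1 = j.val ∨ j.val + 1 = i.val then -1
  else 0

open Fin.NatCast in
lemma exotic_col (n : ℕ) (hn : 2 ≤ n) (i : ℕ) (h1 : 1 ≤ i) (h2 : i ≤ n) :
    exoticPairing n ((i : ℕ) : Fin (n + 1)) 0 =
      (if i = 1 then -T (-1) else 0) + (if i = n then -T 1 else 0) := by
  have hv : (((i : ℕ) : Fin (n + 1)) : ℕ) = i := Fin.val_cast_of_lt (by omega)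
  unfold exoticPairing
  simp only [Fin.ext_iff, hv, Fin.val_zero, and_false, false_and, and_true, true_and,
    or_false, false_or, zero_add]
  split_ifs <;> first | ring1 | (exfalso; omega) | (exfalso; simp_all <;> omega) | (exfalso; simp_all)

open Fin.NatCast in
lemma exotic_row (n : ℕ) (hn : 2 ≤ n) (j : ℕ) (h1 : 1 ≤ j) (h2 : j ≤ n) :
    exoticPairing n 0 ((j : ℕ) : Fin (n + 1)) =
      (if j = 1 then -T 1 else 0) + (if j = n then -T (-1) else 0) := by
  have hv : (((j : ℕ) : Fin (n + 1)) : ℕ) = j := Fin.val_cast_of_lt (by omega)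
  unfold exoticPairing
  simp only [Fin.ext_iff, hv, Fin.val_zero, and_false, false_and, and_true, true_and,
    or_false, false_or, zero_add]
  split_ifs <;> first | ring1 | (exfalso; omega) | (exfalso; simp_all <;> omega) | (exfalso; simp_all)

open Fin.NatCast in
/-- For the exotic realization of the affine Weyl group of type `Ã_n`
(`n ≥ 2`), with `β = α_1 + ⋯ + α_n` and `β^∨ = α_1^∨ + ⋯ + α_n^∨` the highest
finite root and coroot, one has `⟨β^∨, α_0⟩ = Σ_{i=1}^n a_{i,0} = -(q+q⁻¹)` and
`⟨α_0^∨, β⟩ = Σ_{j=1}^n a_{0,j} = -(q+q⁻¹)`, so that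
`⟨β^∨, α_0⟩·⟨α_0^∨, β⟩ = (q+q⁻¹)²`: the realization of the infinite dihedral group
`W' = ⟨s_0, t⟩` given by `{β, α_0}` and `{β^∨, α_0^∨}` has the exotic affine Cartan
matrix of `sl_2`. -/
theorem exotic_dihedral_cartan (n : ℕ) (hn : 2 ≤ n) :
    (∑ i ∈ Finset.Icc 1 n, exoticPairing n ((i : ℕ) : Fin (n + 1)) 0)
        = -(T 1 + T (-1)) ∧
    (∑ j ∈ Finset.Icc 1 n, exoticPairing n 0 ((j : ℕ) : Fin (n + 1)))
        = -(T 1 + T (-1)) ∧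
    (∑ i ∈ Finset.Icc 1 n, exoticPairing n ((i : ℕ) : Fin (n + 1)) 0) *
        (∑ j ∈ Finset.Icc 1 n, exoticPairing n 0 ((j : ℕ) : Fin (n + 1)))
      = (T 1 + T (-1)) ^ 2 := by
  have h1 : (∑ i ∈ Finset.Icc 1 n, exoticPairing n ((i : ℕ) : Fin (n + 1)) 0)
      = -(T 1 + T (-1)) := by
    have e : (∑ i ∈ Finset.Icc 1 n, exoticPairing n ((i : ℕ) : Fin (n + 1)) 0)
        = ∑ i ∈ Finset.Icc 1 n,
            ((if i = 1 then -T (-1) else 0) + (if i = n then -T 1 else 0)) :=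
      Finset.sum_congr rfl (fun i hi => by
        rw [Finset.mem_Icc] at hi
        exact exotic_col n hn i hi.1 hi.2)
    rw [e]
    rw [Finset.sum_add_distrib, Finset.sum_ite_eq' _ 1, Finset.sum_ite_eq' _ n]
    simp only [Finset.mem_Icc]
    rw [if_pos ⟨le_refl 1, by omega⟩, if_pos ⟨by omega, le_refl n⟩]
    ring
  have h2 : (∑ j ∈ Finset.Icc 1 n, exoticPairing n 0 ((j : ℕ) : Fin (n + 1)))
      = -(T 1 + T (-1)) := by
    have e : (∑ j ∈ Finset.Icc 1 n, exoticPairing n 0 ((j : ℕ) : Fin (n + 1)))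
        = ∑ j ∈ Finset.Icc 1 n,
            ((if j = 1 then -T 1 else 0) + (if j = n then -T (-1) else 0)) :=
      Finset.sum_congr rfl (fun j hj => by
        rw [Finset.mem_Icc] at hj
        exact exotic_row n hn j hj.1 hj.2)
    rw [e]
    rw [Finset.sum_add_distrib, Finset.sum_ite_eq' _ 1, Finset.sum_ite_eq' _ n]
    simp only [Finset.mem_Icc]
    rw [if_pos ⟨le_refl 1, by omega⟩, if_pos ⟨by omega, le_refl n⟩]
    ring
  exact ⟨h1, h2, by rw [h1, h2]; ring⟩
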